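/- Let G be a split graph of order n that arises from the disjoint union of a clique C and an independent set I by adding edges, each joining a vertex of C to a vertex of I. Then for every edge uv of G with u ∈ C and v ∈ I, one has n_G(v,u) = 1 and n_G(u,v) ≤ n − d_G(v), and consequently |n_G(u,v) − n_G(v,u)| ≤ n − d_G(v) − 1. -/

import Mathlib

/-- `nG G u v` is the number of vertices of `G` whose distance to `u` is strictly
smaller than their distance to `v` (vertices at infinite distance to both `u` and `v`
are counted for neither, since the extended distance `⊤` is not `< ⊤`). -/
noncomputable def nG {V : Type*} [Fintype V] (G : SimpleGraph V) (u v : V) : ℕ :=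
  Set.ncard {w : V | G.edist w u < G.edist w v}

/-- The Mostar index `Mo(G) = ∑_{uv ∈ E(G)} |nG(u,v) - nG(v,u)|` of a finite simple graph. -/
noncomputable def mostar {V : Type*} [Fintype V] (G : SimpleGraph V) : ℤ :=
  ∑ e ∈ (Set.toFinite G.edgeSet).toFinset,
    Sym2.lift ⟨fun u v => |(nG G u v : ℤ) - (nG G v u : ℤ)|, fun _ _ => abs_sub_comm _ _⟩ e

/-- In a split graph of order `n` (clique `C`, independent set `Cᶜ`), for every edge `uv`
with `u ∈ C` and `v ∉ C`: `nG(v,u) = 1`, `nG(u,v) ≤ n - d(v)`, and hence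
`|nG(u,v) - nG(v,u)| ≤ n - d(v) - 1`. -/
theorem nG_cross_edge {V : Type*} [Fintype V] [DecidableEq V] (G : SimpleGraph V)
    [DecidableRel G.Adj] (n : ℕ) (hn : Fintype.card V = n) (C : Finset V)
    (hclique : ∀ u ∈ C, ∀ v ∈ C, u ≠ v → G.Adj u v)
    (hindep : ∀ u ∉ C, ∀ v ∉ C, ¬ G.Adj u v)
    (u v : V) (hu : u ∈ C) (hv : v ∉ C) (huv : G.Adj u v) :
    nG G v u = 1 ∧ (nG G u v : ℤ) ≤ (n : ℤ) - (G.degree v : ℤ) ∧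
      |(nG G u v : ℤ) - (nG G v u : ℤ)| ≤ (n : ℤ) - (G.degree v : ℤ) - 1 := by
  classical
  -- every neighbor of `v` is in `C`
  have hnbr : ∀ x, G.Adj v x → x ∈ C := by
    intro x hx
    by_contra hxC
    exact hindep v hv x hxC hx
  -- key: for `w ≠ v`, `edist w u ≤ edist w v`
  have key : ∀ w, w ≠ v → G.edist w u ≤ G.edist w v := by
    intro w hw
    rcases eq_or_ne (G.edist w v) ⊤ with h | h
    · rw [h]; exact le_top
    · rw [SimpleGraph.edist_comm] at h
      have main : G.edist u w ≤ G.edist v w := by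
        obtain ⟨p, hp⟩ := G.exists_walk_of_edist_ne_top h
        cases p with
        | nil => exact absurd rfl hw.symm
        | cons hvx q =>
          rename_i x
          have hxC : x ∈ C := hnbr x hvx
          rcases eq_or_ne u x with rfl | hxu
          · calc G.edist u w ≤ (q.length : ℕ∞) := q.edist_le
              _ ≤ G.edist v w := by
                rw [← hp, SimpleGraph.Walk.length_cons]
                exact_mod_cast Nat.le_succ _
          · have hux : G.Adj u x := hclique u hu x hxC hxu
            calc G.edist u w ≤ ((SimpleGraph.Walk.cons hux q).length : ℕ∞) :=
                  (SimpleGraph.Walk.cons hux q).edist_le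
              _ = G.edist v w := by
                rw [← hp, SimpleGraph.Walk.length_cons, SimpleGraph.Walk.length_cons]
      rw [SimpleGraph.edist_comm, SimpleGraph.edist_comm (u := w) (v := v)]
      exact main
  have hvne : v ≠ u := fun h => hv (h ▸ hu)
  have hevu : G.edist v u = 1 := SimpleGraph.edist_eq_one_iff_adj.mpr huv.symm
  -- nG G v u = 1
  have h1 : nG G v u = 1 := by
    have : {w : V | G.edist w v < G.edist w u} = {v} := by
      ext w
      simp only [Set.mem_setOf_eq, Set.mem_singleton_iff]
      constructor
      · intro hlt
        by_contra hw
        exact absurd (key w hw) (not_le.mpr hlt)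
      · rintro rfl
        rw [SimpleGraph.edist_self, hevu]
        norm_num
    rw [nG, this, Set.ncard_singleton]
  -- the forbidden set
  set T : Finset V := (insert v (G.neighborFinset v)).erase u with hT
  have huins : u ∈ insert v (G.neighborFinset v) := by
    simp [SimpleGraph.mem_neighborFinset, huv.symm]
  have hTcard : T.card = G.degree v := by
    rw [hT, Finset.card_erase_of_mem huins, Finset.card_insert_of_notMem (by
      simp [SimpleGraph.mem_neighborFinset, G.irrefl])]
    simp
  -- S ⊆ Tᶜ
  have hsub : {w : V | G.edist w u < G.edist w v} ⊆ (↑(Tᶜ) : Set V) := by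
    intro w hw
    simp only [Set.mem_setOf_eq] at hw
    simp only [Finset.coe_compl, Set.mem_compl_iff, Finset.mem_coe, hT, Finset.mem_erase,
      Finset.mem_insert, SimpleGraph.mem_neighborFinset]
    rintro ⟨hwu, (rfl | hadj)⟩
    · rw [hevu, SimpleGraph.edist_self] at hw
      simp at hw
    · have hwC : w ∈ C := hnbr w hadj
      have hwv : w ≠ v := fun h => hv (h ▸ hwC)
      have h1' : G.edist w u = 1 :=
        SimpleGraph.edist_eq_one_iff_adj.mpr (hclique w hwC u hu hwu)
      have h2' : G.edist w v = 1 := SimpleGraph.edist_eq_one_iff_adj.mpr hadj.symm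
      rw [h1', h2'] at hw
      exact lt_irrefl _ hw
  have hle : nG G u v ≤ n - G.degree v := by
    calc nG G u v ≤ (↑(Tᶜ) : Set V).ncard := Set.ncard_le_ncard hsub (Set.toFinite _)
      _ = Tᶜ.card := by rw [Set.ncard_coe_finset]
      _ = n - G.degree v := by rw [Finset.card_compl, hTcard, hn]
  have hdle : G.degree v ≤ n := by
    rw [← hn, ← SimpleGraph.card_neighborFinset_eq_degree]
    exact Finset.card_le_univ _
  have hleZ : (nG G u v : ℤ) ≤ (n : ℤ) - (G.degree v : ℤ) := by
    calc (nG G u v : ℤ) ≤ ((n - G.degree v : ℕ) : ℤ) := by exact_mod_cast hle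
      _ = (n : ℤ) - (G.degree v : ℤ) := by
        rw [Nat.cast_sub hdle]
  have hone : 1 ≤ nG G u v := by
    have : u ∈ {w : V | G.edist w u < G.edist w v} := by
      simp only [Set.mem_setOf_eq, SimpleGraph.edist_self,
        SimpleGraph.edist_eq_one_iff_adj.mpr huv]
      norm_num
    have := Set.ncard_le_ncard (Set.singleton_subset_iff.mpr this) (Set.toFinite _)
    simpa [nG] using this
  have honeZ : (1 : ℤ) ≤ (nG G u v : ℤ) := by exact_mod_cast hone
  refine ⟨h1, hleZ, ?_⟩
  rw [h1]
  rw [abs_of_nonneg (by omega)]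
  omega
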